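/- For any graph G, any vertex v of G, and any ℓ ≥ 0, the ℓ-leaky forcing numbers satisfy −1 ≤ Z_{(ℓ)}(G − v) − Z_{(ℓ)}(G) ≤ deg(v). -/

import Mathlib

open SimpleGraph

namespace LF

variable {V : Type*}

/-- Vertices eventually forced blue, starting from `S`, with leak set `L`:
a blue vertex not in `L` whose every neighbor other than `w` is blue forces `w`. -/
inductive Forced (G : SimpleGraph V) (L S : Set V) : V → Prop
  | init (v : V) (hv : v ∈ S) : Forced G L S v
  | force (b w : V) (hb : Forced G L S b) (hbL : b ∉ L) (hadj : G.Adj b w)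
      (hall : ∀ u, G.Adj b u → u ≠ w → Forced G L S u) : Forced G L S w

/-- `S` is an ℓ-leaky forcing set of `G`. -/
def IsLeakyForcingSet (G : SimpleGraph V) (ℓ : ℕ) (S : Set V) : Prop :=
  ∀ L : Set V, L.ncard ≤ ℓ → ∀ v, Forced G L S v

/-- The ℓ-leaky forcing number `Z_{(ℓ)}(G)`. -/
noncomputable def leakyForcingNumber (G : SimpleGraph V) [Fintype V] (ℓ : ℕ) : ℕ :=
  sInf {k | ∃ S : Finset V, S.card = k ∧ IsLeakyForcingSet G ℓ ↑S}

/-- An ℓ-leaky fort: a nonempty set `F` such that at most ℓ vertices outside `F`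
have exactly one neighbor in `F`. -/
def IsLeakyFort (G : SimpleGraph V) (ℓ : ℕ) (F : Set V) : Prop :=
  F.Nonempty ∧ {v | v ∉ F ∧ ∃! u, u ∈ F ∧ G.Adj v u}.ncard ≤ ℓ

/-- The path graph on `n` vertices. -/
def pathGraph (n : ℕ) : SimpleGraph (Fin n) :=
  SimpleGraph.fromRel (fun i j => i.val + 1 = j.val)

/-- The cycle graph on `n` vertices. -/
def cycleGraph (n : ℕ) : SimpleGraph (Fin n) :=
  SimpleGraph.fromRel (fun i j => (i.val + 1) % n = j.val)

/-- The star graph on `n` vertices, with center `0`. -/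
def starGraph (n : ℕ) : SimpleGraph (Fin n) :=
  SimpleGraph.fromRel (fun i _ => i.val = 0)

/-- The generalized Petersen graph `P(n,k)`: `Sum.inl i` is the inner vertex `x_{i+1}`,
`Sum.inr i` is the outer vertex `y_{i+1}` (0-indexed). -/
def petersen (n k : ℕ) : SimpleGraph (Fin n ⊕ Fin n) :=
  SimpleGraph.fromRel (fun a b =>
    match a, b with
    | Sum.inr i, Sum.inr j => (i.val + 1) % n = j.val
    | Sum.inl i, Sum.inr j => i = j
    | Sum.inl i, Sum.inl j => (i.val + k) % n = j.val
    | _, _ => False)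

end LF

section Aux
open SimpleGraph LF
variable {V : Type*}

lemma my_lfn_exists (G : SimpleGraph V) [Fintype V] (ℓ : ℕ) :
    ∃ S : Finset V, S.card = leakyForcingNumber G ℓ ∧ IsLeakyForcingSet G ℓ ↑S := by
  have hne : {k | ∃ S : Finset V, S.card = k ∧ IsLeakyForcingSet G ℓ ↑S}.Nonempty :=
    ⟨(Finset.univ : Finset V).card, Finset.univ, rfl, fun L _ v => .init v (by simp)⟩
  obtain ⟨S, hS, hF⟩ := Nat.sInf_mem hne
  exact ⟨S, hS, hF⟩

lemma my_lfn_le (G : SimpleGraph V) [Fintype V] (ℓ : ℕ) (S : Finset V)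
    (h : IsLeakyForcingSet G ℓ ↑S) : leakyForcingNumber G ℓ ≤ S.card :=
  Nat.sInf_le ⟨S, rfl, h⟩

lemma my_forced_mono (G : SimpleGraph V) {L S S₂ : Set V} (hSS : S ⊆ S₂) {w : V}
    (hw : Forced G L S w) : Forced G L S₂ w := by
  induction hw with
  | init w hv => exact .init w (hSS hv)
  | force b w hb hbL hadj hall ihb ihall => exact .force b w ihb hbL hadj ihall

lemma my_forced_induce (G : SimpleGraph V) (v : V) {L S : Set V}
    (L' S' : Set ↥{w : V | w ≠ v})
    (hL' : ∀ x : ↥{w : V | w ≠ v}, x ∈ L' → (x : V) ∈ L)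
    (hS'mem : ∀ x : ↥{w : V | w ≠ v}, (x : V) ∈ S → x ∈ S')
    (hNv : ∀ u, G.Adj v u → u ∈ S) {w : V} (hw : Forced G L S w) :
    ∀ hwv : w ≠ v, Forced (G.induce {w | w ≠ v}) L' S' ⟨w, hwv⟩ := by
  induction hw with
  | init w hv => exact fun hwv => .init _ (hS'mem _ hv)
  | force b w hb hbL hadj hall ihb ihall =>
    intro hwv
    by_cases hbv : b = v
    · subst hbv; exact .init _ (hS'mem _ (hNv w hadj))
    · refine .force ⟨b, hbv⟩ ⟨w, hwv⟩ (ihb hbv)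
        (fun h => hbL (hL' _ h)) (by exact hadj) ?_
      intro u hadj' hne
      exact ihall u hadj' (fun h => hne (Subtype.ext h)) u.2

lemma my_forced_of_induce (G : SimpleGraph V) (v : V) {L : Set V}
    (L' : Set ↥{w : V | w ≠ v}) {S' : Set ↥{w : V | w ≠ v}}
    (hL' : ∀ x : ↥{w : V | w ≠ v}, (x : V) ∈ L → x ∈ L')
    {w : ↥{w : V | w ≠ v}}
    (hw : Forced (G.induce {w | w ≠ v}) L' S' w) :
    Forced G L (Subtype.val '' S' ∪ {v}) ↑w := by
  induction hw with
  | init w hv => exact .init _ (Or.inl ⟨w, hv, rfl⟩)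
  | force b w hb hbL hadj hall ihb ihall =>
    refine .force (b : V) (w : V) ihb (fun (h : (b : V) ∈ L) => hbL (hL' _ h)) (by exact hadj) ?_
    intro u hu hne
    by_cases huv : u = v
    · subst huv; exact .init _ (Or.inr rfl)
    · exact ihall ⟨u, huv⟩ hu (fun h => hne (congrArg Subtype.val h))

end Aux

theorem stmt15 {V : Type*} [Fintype V] [DecidableEq V] (G : SimpleGraph V)
    [DecidableRel G.Adj] (ℓ : ℕ) (v : V) :
    -1 ≤ (LF.leakyForcingNumber (G.induce {w | w ≠ v}) ℓ : ℤ) -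
        LF.leakyForcingNumber G ℓ ∧
    (LF.leakyForcingNumber (G.induce {w | w ≠ v}) ℓ : ℤ) -
        LF.leakyForcingNumber G ℓ ≤ G.degree v := by
  -- upper bound: Z(G-v) ≤ Z(G) + deg v
  have hub : LF.leakyForcingNumber (G.induce {w | w ≠ v}) ℓ ≤
      LF.leakyForcingNumber G ℓ + G.degree v := by
    obtain ⟨S, hcard, hS⟩ := my_lfn_exists G ℓ
    set T : Finset V := (S ∪ G.neighborFinset v).erase v with hT
    set S' : Finset ↥{w : V | w ≠ v} := T.subtype (fun x => x ∈ {w : V | w ≠ v})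
      with hS'def
    have hforce : LF.IsLeakyForcingSet (G.induce {w | w ≠ v}) ℓ ↑S' := by
      intro L' hL' u
      set L : Set V := Subtype.val '' L' with hLdef
      have hLcard : L.ncard ≤ ℓ := by
        rw [hLdef, Set.ncard_image_of_injective _ Subtype.val_injective]; exact hL'
      have h1 : LF.Forced G L (↑S ∪ G.neighborSet v) ↑u :=
        my_forced_mono G Set.subset_union_left (hS L hLcard ↑u)
      have h2 := my_forced_induce G v (L := L) (S := ↑S ∪ G.neighborSet v) L' ↑S'
        (fun x hx => hLdef ▸ ⟨x, hx, rfl⟩)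
        (fun x hx => by
          rw [Finset.mem_coe, hS'def, Finset.mem_subtype]
          refine Finset.mem_erase.mpr ⟨x.2, Finset.mem_union.mpr ?_⟩
          rcases hx with hx | hx
          · exact Or.inl (Finset.mem_coe.mp hx)
          · exact Or.inr ((SimpleGraph.mem_neighborFinset G v ↑x).mpr hx))
        (fun u hu => Or.inr hu) h1 u.2
      exact h2
    have hc : S'.card ≤ S.card + G.degree v := by
      have h1 : S'.card = (T.filter (fun x => x ∈ {w : V | w ≠ v})).card :=
        Finset.card_subtype _ _
      have h2 : T.filter (fun x => x ∈ {w : V | w ≠ v}) = T := by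
        apply Finset.filter_true_of_mem
        intro x hx; exact (Finset.mem_erase.mp hx).1
      calc S'.card = T.card := by rw [h1, h2]
        _ ≤ (S ∪ G.neighborFinset v).card := Finset.card_erase_le
        _ ≤ S.card + (G.neighborFinset v).card := Finset.card_union_le _ _
        _ = S.card + G.degree v := by rw [SimpleGraph.card_neighborFinset_eq_degree]
    calc LF.leakyForcingNumber (G.induce {w | w ≠ v}) ℓ ≤ S'.card :=
          my_lfn_le _ ℓ S' hforce
      _ ≤ S.card + G.degree v := hc
      _ = _ := by rw [hcard]
  -- lower bound: Z(G) ≤ Z(G-v) + 1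
  have hlb : LF.leakyForcingNumber G ℓ ≤
      LF.leakyForcingNumber (G.induce {w | w ≠ v}) ℓ + 1 := by
    obtain ⟨S', hcard', hS'⟩ := my_lfn_exists (G.induce {w | w ≠ v}) ℓ
    set S : Finset V := S'.map ⟨Subtype.val, Subtype.val_injective⟩ ∪ {v} with hSdef
    have hforce : LF.IsLeakyForcingSet G ℓ ↑S := by
      intro L hL u
      have hv_mem : v ∈ (↑S : Set V) := by simp [hSdef]
      by_cases huv : u = v
      · subst huv; exact .init _ hv_mem
      · set L' : Set ↑{w : V | w ≠ v} := {x | ↑x ∈ L} with hL'def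
        have hL'card : L'.ncard ≤ ℓ := by
          refine le_trans ?_ hL
          rw [show L'.ncard = (Subtype.val '' L').ncard from
            (Set.ncard_image_of_injective _ Subtype.val_injective).symm]
          exact Set.ncard_le_ncard (by rintro x ⟨y, hy, rfl⟩; exact hy) L.toFinite
        have h1 := hS' L' hL'card ⟨u, huv⟩
        have h2 := my_forced_of_induce G v (L := L) L' (fun x hx => hx) h1
        refine my_forced_mono G ?_ h2
        intro x hx
        rcases hx with ⟨y, hy, rfl⟩ | hx
        · simp only [hSdef, Finset.coe_union, Set.mem_union, Finset.coe_map]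
          exact Or.inl ⟨y, by simpa using hy, rfl⟩
        · simp only [Set.mem_singleton_iff] at hx; subst hx; exact hv_mem
    have hc : S.card ≤ S'.card + 1 := by
      calc S.card ≤ (S'.map ⟨Subtype.val, Subtype.val_injective⟩).card
            + ({v} : Finset V).card := Finset.card_union_le _ _
        _ = S'.card + 1 := by rw [Finset.card_map, Finset.card_singleton]
    calc LF.leakyForcingNumber G ℓ ≤ S.card := my_lfn_le _ ℓ S hforce
      _ ≤ S'.card + 1 := hc
      _ = _ := by rw [hcard']
  omega
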